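/- arXiv:2310.04905 — 7 statements merged into one kernel-verified Lean document; each statement's English description precedes it below -/
import Mathlib

section
/- (Lemma 1.7) Let U ⊆ ℂ be open and let μ, a, b : U → ℂ be real-differentiable with μ(w) ≠ 0 for all w ∈ U. Then the ℂ⁴-valued map w ↦ μ(w)·W(a(w), b(w)) satisfies ∂_{w̄}(μ·W(a,b)) = 0 at every point of U (i.e., the surface f with f_w = μW(a,b) is minimal, f_{ww̄} = 0) if and only if μ, a and b are all holomorphic on U. -/
open Complex ComplexConjugate

/-- The Weierstrass vector `W(a,b) = (a+b, 1+ab, i(1-ab), a-b) ∈ ℂ⁴`. -/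
noncomputable def W (a b : ℂ) : Fin 4 → ℂ := ![a + b, 1 + a * b, I * (1 - a * b), a - b]

/-- The Wirtinger derivative `g_{w̄} = (1/2)(g_u + i g_v)` of a map `g : ℂ → E`. -/
noncomputable def wdbar {E : Type*} [NormedAddCommGroup E] [NormedSpace ℂ E]
    (g : ℂ → E) (w : ℂ) : E :=
  (2⁻¹ : ℂ) • (fderiv ℝ g w 1 + Complex.I • fderiv ℝ g w Complex.I)

lemma wdbar_eq_zero_of_holo {E : Type*} [NormedAddCommGroup E] [NormedSpace ℂ E]
    {g : ℂ → E} {w : ℂ} (h : DifferentiableAt ℂ g w) : wdbar g w = 0 := by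
  have hf : fderiv ℝ g w = (fderiv ℂ g w).restrictScalars ℝ :=
    (h.hasFDerivAt.restrictScalars ℝ).fderiv
  have hI : fderiv ℂ g w I = I • fderiv ℂ g w 1 := by
    rw [← (fderiv ℂ g w).map_smul, smul_eq_mul, mul_one]
  simp [wdbar, hf, hI, smul_smul, Complex.I_mul_I]

lemma holo_of_wdbar {g : ℂ → ℂ} {w : ℂ} (hd : DifferentiableAt ℝ g w)
    (h : wdbar g w = 0) : DifferentiableAt ℂ g w := by
  set c := fderiv ℝ g w 1 with hc
  have h2 : fderiv ℝ g w 1 + I * fderiv ℝ g w I = 0 := by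
    rw [wdbar] at h
    have h' := (smul_eq_zero.mp h).resolve_left (by norm_num)
    rwa [smul_eq_mul] at h'
  have hI : fderiv ℝ g w I = I * c := by
    rw [hc]
    linear_combination (-I) * h2 + fderiv ℝ g w I * Complex.I_sq
  refine (differentiableAt_iff_restrictScalars ℝ hd).mpr
    ⟨(ContinuousLinearMap.id ℂ ℂ).smulRight c, ?_⟩
  ext z
  have hz : (z : ℂ) = z.re • (1 : ℂ) + z.im • I := by
    simp [Complex.real_smul]
  have key : fderiv ℝ g w z = z * c := by
    conv_lhs => rw [hz]
    rw [map_add, map_smul, map_smul, hI]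
    simp only [Complex.real_smul, smul_eq_mul, ← hc]
    linear_combination c * (Complex.re_add_im z)
  simpa [smul_eq_mul] using key.symm

lemma wdbar_apply {g : ℂ → Fin 4 → ℂ} {w : ℂ} (hd : DifferentiableAt ℝ g w) (i : Fin 4) :
    wdbar (fun z => g z i) w = wdbar g w i := by
  have hf : fderiv ℝ (fun z => g z i) w =
      ((ContinuousLinearMap.proj (R := ℂ) (φ := fun _ : Fin 4 => ℂ) i).restrictScalars
        ℝ).comp (fderiv ℝ g w) :=
    (((ContinuousLinearMap.proj (R := ℂ) (φ := fun _ : Fin 4 => ℂ) i).restrictScalars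
      ℝ).hasFDerivAt.comp w hd.hasFDerivAt).fderiv
  simp [wdbar, hf, Pi.smul_apply, smul_eq_mul]
/-- Lemma 1.7: for real-differentiable `μ, a, b` on an open `U` with `μ ≠ 0`,
the map `w ↦ μ(w)·W(a(w),b(w))` satisfies `∂_{w̄}(μ·W(a,b)) = 0` on `U` (i.e. the surface
with `f_w = μW(a,b)` is minimal) iff `μ`, `a` and `b` are all holomorphic on `U`. -/
theorem stmt_2 (U : Set ℂ) (hU : IsOpen U) (μ a b : ℂ → ℂ)
    (hμd : ∀ w ∈ U, DifferentiableAt ℝ μ w)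
    (had : ∀ w ∈ U, DifferentiableAt ℝ a w)
    (hbd : ∀ w ∈ U, DifferentiableAt ℝ b w)
    (hμ0 : ∀ w ∈ U, μ w ≠ 0) :
    (∀ w ∈ U, wdbar (fun z => μ z • W (a z) (b z)) w = 0) ↔
      ((∀ w ∈ U, DifferentiableAt ℂ μ w) ∧ (∀ w ∈ U, DifferentiableAt ℂ a w) ∧
        (∀ w ∈ U, DifferentiableAt ℂ b w)) := by
  set G : ℂ → Fin 4 → ℂ := fun z => μ z • W (a z) (b z) with hG
  have hGval : ∀ (z : ℂ), G z 0 = μ z * (a z + b z) ∧ G z 1 = μ z * (1 + a z * b z) ∧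
      G z 2 = μ z * (I * (1 - a z * b z)) ∧ G z 3 = μ z * (a z - b z) := by
    intro z
    refine ⟨?_, ?_, ?_, ?_⟩ <;> simp [hG, W]
  constructor
  · intro H
    have key : ∀ w ∈ U, DifferentiableAt ℂ μ w ∧ DifferentiableAt ℂ a w ∧
        DifferentiableAt ℂ b w := by
      intro w hw
      have hWd : DifferentiableAt ℝ (fun z => W (a z) (b z)) w := by
        apply differentiableAt_pi.mpr
        intro i
        fin_cases i <;> simp [W]
        · exact (had w hw).add (hbd w hw)
        · exact (had w hw).mul (hbd w hw)
        · exact (((had w hw).mul (hbd w hw)).const_sub 1).const_mul I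
        · exact (had w hw).sub (hbd w hw)
      have hGd : DifferentiableAt ℝ G w := (hμd w hw).smul hWd
      have hholo : ∀ i : Fin 4, DifferentiableAt ℂ (fun z => G z i) w := by
        intro i
        refine holo_of_wdbar (differentiableAt_pi.mp hGd i) ?_
        rw [wdbar_apply hGd, H w hw]
        rfl
      have hμh : DifferentiableAt ℂ μ w := by
        have e : μ = fun z => (G z 1 + (-I) * G z 2) / 2 := by
          funext z
          obtain ⟨e0, e1, e2, e3⟩ := hGval z
          rw [e1, e2]
          linear_combination (μ z * (1 - a z * b z) / 2) * Complex.I_sq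
        rw [e]
        exact ((hholo 1).add ((hholo 2).const_mul (-I))).div_const 2
      have hμa : DifferentiableAt ℂ (fun z => μ z * a z) w := by
        have e : (fun z => μ z * a z) = fun z => (G z 0 + G z 3) / 2 := by
          funext z
          obtain ⟨e0, e1, e2, e3⟩ := hGval z
          rw [e0, e3]; ring
        rw [e]
        exact ((hholo 0).add (hholo 3)).div_const 2
      have hμb : DifferentiableAt ℂ (fun z => μ z * b z) w := by
        have e : (fun z => μ z * b z) = fun z => (G z 0 - G z 3) / 2 := by
          funext z
          obtain ⟨e0, e1, e2, e3⟩ := hGval z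
          rw [e0, e3]; ring
        rw [e]
        exact ((hholo 0).sub (hholo 3)).div_const 2
      have hev : ∀ c : ℂ → ℂ, (fun z => μ z * c z / μ z) =ᶠ[nhds w] c := by
        intro c
        filter_upwards [hU.mem_nhds hw] with z hz
        field_simp [hμ0 z hz]
      refine ⟨hμh, ?_, ?_⟩
      · exact (hμa.div hμh (hμ0 w hw)).congr_of_eventuallyEq (hev a).symm
      · exact (hμb.div hμh (hμ0 w hw)).congr_of_eventuallyEq (hev b).symm
    exact ⟨fun w hw => (key w hw).1, fun w hw => (key w hw).2.1, fun w hw => (key w hw).2.2⟩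
  · rintro ⟨h1, h2, h3⟩ w hw
    apply wdbar_eq_zero_of_holo
    apply (h1 w hw).smul
    apply differentiableAt_pi.mpr
    intro i
    fin_cases i <;> simp [W]
    · exact (h2 w hw).add (h3 w hw)
    · exact (h2 w hw).mul (h3 w hw)
    · exact (((h2 w hw).mul (h3 w hw)).const_sub 1).const_mul I
    · exact (h2 w hw).sub (h3 w hw)
end

section
/- (Lemma 2.4, normal frame) Let a ∈ ℂ and θ ∈ ℝ with 1 − 2|a|²cos θ + |a|⁴ ≠ 0 (equivalently |1 − |a|²e^{−iθ}| ≠ 0), and set D = 4(1 − 2|a|²cos θ + |a|⁴). Define τ(θ;a) = (L₃(a) + L₀(e^{iθ}a))/√D and ν(θ;a) = (L₃(a) − L₀(e^{iθ}a))/√D. Then ⟨τ,τ⟩ = −1, ⟨ν,ν⟩ = 1, ⟨τ,ν⟩ = 0, the last coordinate of τ is 0 (τ³ = 0), the first coordinate of ν is 0 (ν⁰ = 0), and τ, ν are Minkowski-orthogonal to the tangent plane of the θ-family: ⟨τ, W(a, e^{iθ}a)⟩ = 0 and ⟨ν, W(a, e^{iθ}a)⟩ = 0 for the complex-bilinear extension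 of the Minkowski product to ℂ⁴. -/
open Complex ComplexConjugate

/-- The complex-bilinear Lorentz form on ℂ⁴ (restricting to the Minkowski product on
real vectors). -/
noncomputable def lprod (z y : Fin 4 → ℂ) : ℂ :=
  -(z 0 * y 0) + z 1 * y 1 + z 2 * y 2 + z 3 * y 3

/-- `L₃(a) = (1+|a|², a+conj a, −i(a−conj a), −1+|a|²)` (a real vector). -/
noncomputable def L3 (a : ℂ) : Fin 4 → ℂ :=
  ![1 + (‖a‖ : ℂ) ^ 2, a + conj a, -I * (a - conj a), -1 + (‖a‖ : ℂ) ^ 2]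

/-- `L₀(e^{iθ}a) = (1+|a|², ae^{iθ}+conj a·e^{−iθ}, −i(ae^{iθ}−conj a·e^{−iθ}), 1−|a|²)`
(a real vector). -/
noncomputable def L0 (θ : ℝ) (a : ℂ) : Fin 4 → ℂ :=
  ![1 + (‖a‖ : ℂ) ^ 2,
    a * Complex.exp (θ * I) + conj a * Complex.exp (-(θ : ℂ) * I),
    -I * (a * Complex.exp (θ * I) - conj a * Complex.exp (-(θ : ℂ) * I)),
    1 - (‖a‖ : ℂ) ^ 2]

/-- Lemma 2.4, normal frame: with `D = 4(1 − 2|a|²cos θ + |a|⁴) ≠ 0`,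
`τ = (L₃(a)+L₀(e^{iθ}a))/√D` and `ν = (L₃(a)−L₀(e^{iθ}a))/√D` satisfy `⟨τ,τ⟩ = −1`,
`⟨ν,ν⟩ = 1`, `⟨τ,ν⟩ = 0`, `τ³ = 0`, `ν⁰ = 0`, and are orthogonal to the tangent plane:
`⟨τ, W(a, e^{iθ}a)⟩ = 0 = ⟨ν, W(a, e^{iθ}a)⟩`. -/
theorem stmt_7 (a : ℂ) (θ : ℝ)
    (h : 1 - 2 * ‖a‖ ^ 2 * Real.cos θ + ‖a‖ ^ 4 ≠ 0)
    (D : ℝ) (hD : D = 4 * (1 - 2 * ‖a‖ ^ 2 * Real.cos θ + ‖a‖ ^ 4))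
    (τ ν : Fin 4 → ℂ)
    (hτ : τ = ((Real.sqrt D : ℂ))⁻¹ • (L3 a + L0 θ a))
    (hν : ν = ((Real.sqrt D : ℂ))⁻¹ • (L3 a - L0 θ a)) :
    lprod τ τ = -1 ∧ lprod ν ν = 1 ∧ lprod τ ν = 0 ∧
    τ 3 = 0 ∧ ν 0 = 0 ∧
    lprod τ (W a (Complex.exp (θ * I) * a)) = 0 ∧
    lprod ν (W a (Complex.exp (θ * I) * a)) = 0 := by
  have hcos1 : Real.cos θ ≤ 1 := Real.cos_le_one θ
  have hpos : 0 < 1 - 2 * ‖a‖ ^ 2 * Real.cos θ + ‖a‖ ^ 4 := by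
    rcases lt_or_eq_of_le (by nlinarith [sq_nonneg (1 - ‖a‖ ^ 2), sq_nonneg (‖a‖)] :
      (0:ℝ) ≤ 1 - 2 * ‖a‖ ^ 2 * Real.cos θ + ‖a‖ ^ 4) with h1 | h1
    · exact h1
    · exact absurd h1.symm h
  have hDpos : 0 < D := by rw [hD]; linarith
  have hs : Real.sqrt D ^ 2 = D := Real.sq_sqrt hDpos.le
  have hsne : ((Real.sqrt D : ℝ) : ℂ) ≠ 0 := by
    exact_mod_cast (Real.sqrt_pos.mpr hDpos).ne'
  set s : ℂ := ((Real.sqrt D : ℝ) : ℂ) with hsdef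
  set x : ℂ := Complex.exp (θ * I) with hxdef
  set y : ℂ := Complex.exp (-(θ : ℂ) * I) with hydef
  set A : ℂ := (‖a‖ : ℂ) with hAdef
  set c : ℂ := conj a with hcdef
  have hI : (I : ℂ) ^ 2 = -1 := Complex.I_sq
  have haq : A ^ 2 = a * c := by
    rw [hAdef, hcdef, ← Complex.ofReal_pow, Complex.sq_norm, Complex.mul_conj]
  have he : x * y = 1 := by
    rw [hxdef, hydef, ← Complex.exp_add]; simp
  have hs2 : s ^ 2 = 4 * (1 - 2 * A ^ 2 * ((Real.cos θ : ℝ) : ℂ) + A ^ 4) := by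
    rw [hsdef, ← Complex.ofReal_pow, hs, hD, hAdef]; push_cast; ring
  have hcos : ((Real.cos θ : ℝ) : ℂ) = (x + y) / 2 := by
    rw [hxdef, hydef, Complex.ofReal_cos, Complex.cos, neg_mul]
  have hs2' : s ^ 2 = 4 - 4 * (a * c) * x - 4 * (a * c) * y + 4 * a ^ 2 * c ^ 2 := by
    linear_combination hs2 + (-8 * ((Real.cos θ : ℝ) : ℂ) + 4 * (A ^ 2 + a * c)) * haq
      + (-8 * (a * c)) * hcos
  have key1 : lprod (L3 a + L0 θ a) (L3 a + L0 θ a) = -(s ^ 2) := by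
    simp only [lprod, L3, L0, Pi.add_apply, Matrix.cons_val_zero, Matrix.cons_val_one,
      Matrix.head_cons, Matrix.cons_val_two, Matrix.tail_cons, Matrix.cons_val_three,
      ← hxdef, ← hydef, ← hAdef, ← hcdef]
    linear_combination (c^2 + 2*c^2*y + c^2*y^2 - 2*a*c - 2*a*c*y - 2*a*c*x - 2*a*c*x*y
        + a^2 + 2*a^2*x + a^2*x^2) * hI + (-8 - 4*A^2 - 4*a*c) * haq + hs2' + (4*a*c) * he
  have key2 : lprod (L3 a - L0 θ a) (L3 a - L0 θ a) = s ^ 2 := by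
    simp only [lprod, L3, L0, Pi.sub_apply, Matrix.cons_val_zero, Matrix.cons_val_one,
      Matrix.head_cons, Matrix.cons_val_two, Matrix.tail_cons, Matrix.cons_val_three,
      ← hxdef, ← hydef, ← hAdef, ← hcdef]
    linear_combination (c^2 - 2*c^2*y + c^2*y^2 - 2*a*c + 2*a*c*y + 2*a*c*x - 2*a*c*x*y
        + a^2 - 2*a^2*x + a^2*x^2) * hI + (-8 + 4*A^2 + 4*a*c) * haq - hs2' + (4*a*c) * he
  have key3 : lprod (L3 a + L0 θ a) (L3 a - L0 θ a) = 0 := by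
    simp only [lprod, L3, L0, Pi.add_apply, Pi.sub_apply, Matrix.cons_val_zero,
      Matrix.cons_val_one, Matrix.head_cons, Matrix.cons_val_two, Matrix.tail_cons,
      Matrix.cons_val_three, ← hxdef, ← hydef, ← hAdef, ← hcdef]
    linear_combination (c^2 - c^2*y^2 - 2*a*c + 2*a*c*x*y + a^2 - a^2*x^2) * hI
      + (-4*a*c) * he
  have key4 : lprod (L3 a + L0 θ a) (W a (x * a)) = 0 := by
    simp only [lprod, L3, L0, W, Pi.add_apply, Matrix.cons_val_zero, Matrix.cons_val_one,
      Matrix.head_cons, Matrix.cons_val_two, Matrix.tail_cons, Matrix.cons_val_three,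
      ← hxdef, ← hydef, ← hAdef, ← hcdef]
    linear_combination (c + c*y - a - a*x - a^2*c*x - a^2*c*x*y + a^3*x + a^3*x^2) * hI
      + (-2*a - 2*a*x) * haq + (2*a^2*c) * he
  have key5 : lprod (L3 a - L0 θ a) (W a (x * a)) = 0 := by
    simp only [lprod, L3, L0, W, Pi.sub_apply, Matrix.cons_val_zero, Matrix.cons_val_one,
      Matrix.head_cons, Matrix.cons_val_two, Matrix.tail_cons, Matrix.cons_val_three,
      ← hxdef, ← hydef, ← hAdef, ← hcdef]
    linear_combination (c - c*y - a + a*x - a^2*c*x + a^2*c*x*y + a^3*x - a^3*x^2) * hI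
      + (2*a - 2*a*x) * haq + (-2*a^2*c) * he
  have hτν1 : lprod τ τ = s⁻¹ ^ 2 * lprod (L3 a + L0 θ a) (L3 a + L0 θ a) := by
    rw [hτ]; simp only [lprod, Pi.smul_apply, smul_eq_mul]; ring
  have hτν2 : lprod ν ν = s⁻¹ ^ 2 * lprod (L3 a - L0 θ a) (L3 a - L0 θ a) := by
    rw [hν]; simp only [lprod, Pi.smul_apply, smul_eq_mul]; ring
  have hτν3 : lprod τ ν = s⁻¹ ^ 2 * lprod (L3 a + L0 θ a) (L3 a - L0 θ a) := by
    rw [hτ, hν]; simp only [lprod, Pi.smul_apply, smul_eq_mul]; ring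
  have hτν4 : lprod τ (W a (x * a)) = s⁻¹ * lprod (L3 a + L0 θ a) (W a (x * a)) := by
    rw [hτ]; simp only [lprod, Pi.smul_apply, smul_eq_mul]; ring
  have hτν5 : lprod ν (W a (x * a)) = s⁻¹ * lprod (L3 a - L0 θ a) (W a (x * a)) := by
    rw [hν]; simp only [lprod, Pi.smul_apply, smul_eq_mul]; ring
  refine ⟨?_, ?_, ?_, ?_, ?_, ?_, ?_⟩
  · rw [hτν1, key1]; field_simp
  · rw [hτν2, key2]; field_simp
  · rw [hτν3, key3, mul_zero]
  · rw [hτ]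
    simp only [Pi.smul_apply, Pi.add_apply, L3, L0, Matrix.cons_val_three, Matrix.cons_val_two,
      Matrix.tail_cons, Matrix.head_cons, Matrix.cons_val_one, Matrix.cons_val_zero,
      smul_eq_mul, ← hAdef]
    ring
  · rw [hν]
    simp only [Pi.smul_apply, Pi.sub_apply, L3, L0, Matrix.cons_val_three, Matrix.cons_val_two,
      Matrix.tail_cons, Matrix.head_cons, Matrix.cons_val_one, Matrix.cons_val_zero,
      smul_eq_mul, ← hAdef]
    ring
  · rw [hτν4, key4, mul_zero]
  · rw [hτν5, key5, mul_zero]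
end

section
/- (Lemma 2.4, metric of the θ-family) For all a, μ ∈ ℂ and θ ∈ ℝ, ⟨μW(a, e^{iθ}a), conj(μW(a, e^{iθ}a))⟩ = 2|μ|²(1 − 2|a|²cos θ + |a|⁴), where conj is applied componentwise. Consequently the induced conformal factor of the θ-family, λ_θ² = 2⟨f_w, conj(f_w)⟩ with f_w = μW(a, e^{iθ}a), equals 4|μ|²(1 − 2|a|²cos θ + |a|⁴). -/
open Complex ComplexConjugate

/-- Lemma 2.4, metric of the θ-family: for `f_w = μW(a, e^{iθ}a)`,
`⟨f_w, conj f_w⟩ = 2|μ|²(1 − 2|a|²cos θ + |a|⁴)`, and the induced conformal factor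
`λ_θ² = 2⟨f_w, conj f_w⟩` equals `4|μ|²(1 − 2|a|²cos θ + |a|⁴)`. -/
theorem stmt_8 (a μ : ℂ) (θ : ℝ) (fw : Fin 4 → ℂ)
    (hfw : fw = μ • W a (Complex.exp (θ * I) * a)) :
    lprod fw (fun i => conj (fw i)) =
      2 * (‖μ‖ : ℂ) ^ 2 *
        (1 - 2 * (‖a‖ : ℂ) ^ 2 * (Real.cos θ : ℂ) + (‖a‖ : ℂ) ^ 4) ∧
    2 * lprod fw (fun i => conj (fw i)) =
      4 * (‖μ‖ : ℂ) ^ 2 *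
        (1 - 2 * (‖a‖ : ℂ) ^ 2 * (Real.cos θ : ℂ) + (‖a‖ : ℂ) ^ 4) := by
  have key : lprod fw (fun i => conj (fw i)) =
      2 * (‖μ‖ : ℂ) ^ 2 *
        (1 - 2 * (‖a‖ : ℂ) ^ 2 * (Real.cos θ : ℂ) + (‖a‖ : ℂ) ^ 4) := by
    subst hfw
    have hI : (I : ℂ) * I = -1 := Complex.I_mul_I
    have h5 : Complex.exp (θ * I) * Complex.exp (-(θ * I)) = 1 := by
      rw [← Complex.exp_add]; simp
    have h4 : Complex.exp (θ * I) + Complex.exp (-(θ * I)) = 2 * (Real.cos θ : ℂ) := by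
      rw [Complex.ofReal_cos, Complex.cos]
      ring
    have h2 : a * conj a = (‖a‖ : ℂ) ^ 2 := by
      rw [Complex.mul_conj, ← Complex.sq_norm]; norm_cast
    have h1 : μ * conj μ = (‖μ‖ : ℂ) ^ 2 := by
      rw [Complex.mul_conj, ← Complex.sq_norm]; norm_cast
    have h3 : conj (Complex.exp ((θ : ℂ) * I)) = Complex.exp (-(θ * I)) := by
      rw [← Complex.exp_conj]
      congr 1
      simp [Complex.conj_ofReal]
    have hA4 : ((‖a‖ : ℂ)) ^ 4 = ((‖a‖ : ℂ) ^ 2) ^ 2 := by ring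
    simp only [lprod, W, Pi.smul_apply, smul_eq_mul, Matrix.cons_val_zero, Matrix.cons_val_one,
      Matrix.head_cons, Matrix.cons_val_two, Matrix.tail_cons, Matrix.cons_val_three,
      map_mul, map_add, map_sub, map_one, Complex.conj_I, h3, hA4]
    set e := Complex.exp ((θ : ℂ) * I)
    set f := Complex.exp (-((θ : ℂ) * I))
    set A := (‖a‖ : ℂ)
    set C := (Real.cos θ : ℂ)
    linear_combination (-(1 - e * a ^ 2) * (1 - f * (conj a) ^ 2) * μ * conj μ) * hI +
      (2 * μ * conj μ * a ^ 2 * (conj a) ^ 2) * h5 +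
      (-2 * μ * conj μ * a * conj a) * h4 +
      (μ * conj μ * (2 * (a * conj a + A ^ 2) - 4 * C)) * h2 +
      (2 + 2 * (A ^ 2) ^ 2 - 4 * A ^ 2 * C) * h1
  exact ⟨key, by rw [key]; ring⟩
end

section
/- (Theorem, minimality of the θ-family) Let U ⊆ ℂ be open, θ ∈ ℝ fixed, and let μ, a : U → ℂ be real-differentiable with μ(w) ≠ 0 for all w ∈ U. Then ∂_{w̄}(μ·W(a, e^{iθ}a)) = 0 at every point of U (i.e., each surface F(θ;·) of the θ-family determined by f_w = μW(a, e^{iθ}a) is minimal) if and only if a and μ are holomorphic functions on U. -/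
open Complex ComplexConjugate

set_option linter.unnecessarySimpa false in
lemma wdbar_eq_zero_iff {E : Type*} [NormedAddCommGroup E] [NormedSpace ℂ E]
    {g : ℂ → E} {w : ℂ} (hg : DifferentiableAt ℝ g w) :
    wdbar g w = 0 ↔ DifferentiableAt ℂ g w := by
  constructor
  · intro h
    rw [wdbar, smul_eq_zero] at h
    rcases h with h | h
    · norm_num at h
    · have hB : fderiv ℝ g w I = I • fderiv ℝ g w 1 := by
        have h2 := congrArg (fun x => I • x) h
        simp only [smul_add, smul_smul, Complex.I_mul_I, neg_one_smul, smul_zero] at h2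
        have h3 : I • fderiv ℝ g w 1 - fderiv ℝ g w I = 0 := by rwa [sub_eq_add_neg]
        exact (sub_eq_zero.mp h3).symm
      rw [differentiableAt_iff_restrictScalars ℝ hg]
      refine ⟨(1 : ℂ →L[ℂ] ℂ).smulRight (fderiv ℝ g w 1), ?_⟩
      apply ContinuousLinearMap.ext
      intro z
      have hz : z = (z.re : ℝ) • (1:ℂ) + (z.im : ℝ) • I := by
        simp [Complex.real_smul, Complex.re_add_im]
      simp only [ContinuousLinearMap.coe_restrictScalars',
        ContinuousLinearMap.smulRight_apply, ContinuousLinearMap.one_apply]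
      conv_rhs => rw [hz]
      rw [map_add, map_smul, map_smul, hB]
      conv_lhs => rw [hz]
      rw [add_smul, smul_assoc, smul_assoc, one_smul]
  · intro h
    have hf : fderiv ℝ g w = (fderiv ℂ g w).restrictScalars ℝ := h.fderiv_restrictScalars ℝ
    have h1 : fderiv ℂ g w I = I • fderiv ℂ g w 1 := by
      simpa using ((fderiv ℂ g w).map_smul I 1).symm
    rw [wdbar, hf]
    simp only [ContinuousLinearMap.coe_restrictScalars']
    rw [h1, smul_smul, Complex.I_mul_I, neg_one_smul]
    simp

/-- minimality of the θ-family: for fixed `θ` and real-differentiable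
`μ, a` on open `U` with `μ ≠ 0`, one has `∂_{w̄}(μ·W(a, e^{iθ}a)) = 0` on `U` (each
member of the θ-family is minimal) iff `a` and `μ` are holomorphic on `U`. -/
theorem stmt_9 (U : Set ℂ) (hU : IsOpen U) (θ : ℝ) (μ a : ℂ → ℂ)
    (hμd : ∀ w ∈ U, DifferentiableAt ℝ μ w)
    (had : ∀ w ∈ U, DifferentiableAt ℝ a w)
    (hμ0 : ∀ w ∈ U, μ w ≠ 0) :
    (∀ w ∈ U, wdbar (fun z => μ z • W (a z) (Complex.exp (θ * I) * a z)) w = 0) ↔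
      ((∀ w ∈ U, DifferentiableAt ℂ a w) ∧ (∀ w ∈ U, DifferentiableAt ℂ μ w)) := by
  set c : ℂ := Complex.exp (θ * I) with hc
  set g : ℂ → (Fin 4 → ℂ) := fun z => μ z • W (a z) (c * a z) with hgdef
  have hcomp : ∀ z i, g z i = μ z * (W (a z) (c * a z)) i := by intro z i; simp [hgdef]
  have hgr : ∀ w ∈ U, DifferentiableAt ℝ g w := by
    intro w hw
    have h1 := hμd w hw; have h2 := had w hw
    rw [differentiableAt_pi]
    intro i
    simp only [hgdef, Pi.smul_apply, smul_eq_mul, W]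
    fin_cases i <;> simp <;> fun_prop
  constructor
  · intro hmin
    have hgc : ∀ w ∈ U, DifferentiableAt ℂ g w := fun w hw =>
      (wdbar_eq_zero_iff (hgr w hw)).mp (hmin w hw)
    have hμc : ∀ w ∈ U, DifferentiableAt ℂ μ w := by
      intro w hw
      have hkey : μ = fun z => (g z 1 - I * g z 2) / 2 := by
        funext z
        simp only [hcomp, W, Matrix.cons_val_one, Matrix.head_cons, Matrix.cons_val_two,
          Matrix.tail_cons, Matrix.cons_val_zero]
        field_simp
        ring_nf
        linear_combination (-(μ z * a z * c * a z) + μ z) * Complex.I_sq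
      rw [hkey]
      have h1 : DifferentiableAt ℂ (fun z => g z 1) w := (differentiableAt_pi.mp (hgc w hw)) 1
      have h2 : DifferentiableAt ℂ (fun z => g z 2) w := (differentiableAt_pi.mp (hgc w hw)) 2
      exact (h1.sub (h2.const_mul I)).div_const 2
    have hma : ∀ w ∈ U, DifferentiableAt ℂ (fun z => μ z * a z) w := by
      intro w hw
      have hkey : (fun z => μ z * a z) = fun z => (g z 0 + g z 3) / 2 := by
        funext z
        simp only [hcomp, W, Matrix.cons_val_zero, Matrix.cons_val_three, Matrix.tail_cons,
          Matrix.head_cons]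
        ring
      rw [hkey]
      have h1 : DifferentiableAt ℂ (fun z => g z 0) w := (differentiableAt_pi.mp (hgc w hw)) 0
      have h2 : DifferentiableAt ℂ (fun z => g z 3) w := (differentiableAt_pi.mp (hgc w hw)) 3
      exact (h1.add h2).div_const 2
    refine ⟨?_, hμc⟩
    intro w hw
    have heq : a =ᶠ[nhds w] fun z => (μ z * a z) / μ z := by
      filter_upwards [hU.mem_nhds hw] with z hz
      field_simp [hμ0 z hz]
    exact DifferentiableAt.congr_of_eventuallyEq ((hma w hw).div (hμc w hw) (hμ0 w hw)) heq
  · rintro ⟨hac, hμc⟩ w hw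
    have hdc : DifferentiableAt ℂ g w := by
      have h1 := hμc w hw; have h2 := hac w hw
      rw [differentiableAt_pi]
      intro i
      simp only [hgdef, Pi.smul_apply, smul_eq_mul, W]
      fin_cases i <;> simp <;> fun_prop
    exact (wdbar_eq_zero_iff (hgr w hw)).mpr hdc
end

section
/- (Theorem, Gauss curvature of the θ-family) Let U ⊆ ℂ be open, and let a, μ : U → ℂ be holomorphic with μ(w) ≠ 0 and |a(w)| ≠ 1 for all w ∈ U. Fix θ ∈ ℝ and set λ_θ(w) = √(4|μ(w)|²(1 − 2|a(w)|²cos θ + |a(w)|⁴)) > 0. Then the Gauss curvature K(θ;w) = −(1/λ_θ²) Δ ln λ_θ of the surface F(θ;·) satisfies, at every w ∈ U, K(θ;w) = |a'(w)|²((1 + |a(w)|⁴)cos θ − 2|a(w)|²) / (|μ(w)|²(1 − 2|a(w)|²cos θ + |a(w)|⁴)³). -/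
open Complex ComplexConjugate

/-- The Euclidean Laplacian `Δf = f_uu + f_vv` of `f : ℂ → ℝ`, `w = u + iv`. -/
noncomputable def lap (f : ℂ → ℝ) (w : ℂ) : ℝ :=
  fderiv ℝ (fun z => fderiv ℝ f z 1) w 1 +
    fderiv ℝ (fun z => fderiv ℝ f z Complex.I) w Complex.I

open Filter Topology

lemma lap_congr {f g : ℂ → ℝ} {w : ℂ} (h : f =ᶠ[𝓝 w] g) : lap f w = lap g w := by
  have h1 : ∀ v : ℂ, (fun z => fderiv ℝ f z v) =ᶠ[𝓝 w] (fun z => fderiv ℝ g z v) := by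
    intro v
    filter_upwards [h.eventuallyEq_nhds] with z hz
    rw [hz.fderiv_eq]
  unfold lap
  rw [(h1 1).fderiv_eq, (h1 I).fderiv_eq]

lemma fderiv_real_of_holo {a : ℂ → ℂ} {z : ℂ} (h : DifferentiableAt ℂ a z) (v : ℂ) :
    fderiv ℝ a z v = deriv a z * v := by
  rw [h.fderiv_restrictScalars ℝ]
  have : (fderiv ℂ a z) v = deriv a z * v := by
    have := (fderiv ℂ a z).map_smul v 1
    simpa [smul_eq_mul, fderiv_apply_one_eq_deriv, mul_comm] using this
  simpa using this

lemma deriv_differentiableAt {a : ℂ → ℂ} {w : ℂ}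
    (h : ∀ᶠ z in 𝓝 w, DifferentiableAt ℂ a z) : DifferentiableAt ℂ (deriv a) w := by
  have hA : AnalyticAt ℂ a w := Complex.analyticAt_iff_eventually_differentiableAt.2 h
  have hfd : DifferentiableAt ℂ (fderiv ℂ a) w := hA.fderiv.differentiableAt
  have : deriv a = fun z => (fderiv ℂ a z) 1 := funext fun z => (fderiv_apply_one_eq_deriv).symm
  rw [this]
  exact hfd.clm_apply (differentiableAt_const 1)

lemma lap_comp_holo {a : ℂ → ℂ} {H : ℂ → ℝ} {w : ℂ}
    (ha : ∀ᶠ z in 𝓝 w, DifferentiableAt ℂ a z)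
    (hH : ∀ᶠ ζ in 𝓝 (a w), ContDiffAt ℝ 2 H ζ) :
    lap (fun z => H (a z)) w = ‖deriv a w‖ ^ 2 * lap H (a w) := by
  have haw : DifferentiableAt ℂ a w := ha.self_of_nhds
  have hHw : ContDiffAt ℝ 2 H (a w) := hH.self_of_nhds
  have hHnear : ∀ᶠ z in 𝓝 w, ContDiffAt ℝ 2 H (a z) := haw.continuousAt.eventually hH
  have key : ∀ v : ℂ, (fun z => fderiv ℝ (fun z => H (a z)) z v)
      =ᶠ[𝓝 w] (fun z => fderiv ℝ H (a z) (deriv a z * v)) := by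
    intro v
    filter_upwards [ha, hHnear] with z hz hHz
    have hdH : DifferentiableAt ℝ H (a z) := hHz.differentiableAt (by norm_num)
    have hcomp : fderiv ℝ (fun z => H (a z)) z
        = (fderiv ℝ H (a z)).comp (fderiv ℝ a z) :=
      fderiv_comp z hdH (hz.restrictScalars ℝ)
    rw [hcomp]
    simp [ContinuousLinearMap.comp_apply, fderiv_real_of_holo hz]
  have hfd2 : DifferentiableAt ℝ (fderiv ℝ H) (a w) :=
    (hHw.fderiv_right (m := 1) (le_refl _)).differentiableAt one_ne_zero
  set B2 := fderiv ℝ (fderiv ℝ H) (a w) with hB2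
  have hB : HasFDerivAt (fun z => fderiv ℝ H (a z))
      (B2.comp (fderiv ℝ a w)) w :=
    hfd2.hasFDerivAt.comp w (haw.restrictScalars ℝ).hasFDerivAt
  have hd : DifferentiableAt ℂ (deriv a) w := deriv_differentiableAt ha
  set α := deriv a w with hα
  set β := deriv (deriv a) w with hβ
  have hGv : ∀ v : ℂ, fderiv ℝ (fun z => fderiv ℝ H (a z) (deriv a z * v)) w v
      = B2 (α * v) (α * v) + (fderiv ℝ H (a w)) (β * v * v) := by
    intro v
    have hcv : HasFDerivAt (fun z => deriv a z * v)
        ((fderiv ℝ (deriv a) w).smulRight v) w :=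
      ((hd.restrictScalars ℝ).hasFDerivAt).mul_const' v
    have htot := hB.clm_apply hcv
    rw [htot.fderiv]
    simp [ContinuousLinearMap.comp_apply, ContinuousLinearMap.add_apply,
      ContinuousLinearMap.smulRight_apply, ContinuousLinearMap.flip_apply,
      fderiv_real_of_holo haw, fderiv_real_of_holo hd, smul_eq_mul]
    exact add_comm _ _
  -- second derivative of H itself
  have hlapH : ∀ u v : ℂ, fderiv ℝ (fun z => fderiv ℝ H z v) (a w) u = B2 u v := by
    intro u v
    have htot := hfd2.hasFDerivAt.clm_apply (hasFDerivAt_const v (a w))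
    rw [htot.fderiv]
    simp [hB2]
  have e1 : lap (fun z => H (a z)) w
      = B2 α α + B2 (α * I) (α * I)
        + ((fderiv ℝ H (a w)) β + (fderiv ℝ H (a w)) (β * I * I)) := by
    unfold lap
    rw [(key 1).fderiv_eq, (key I).fderiv_eq, hGv 1, hGv I]
    ring_nf
  have e2 : (fderiv ℝ H (a w)) β + (fderiv ℝ H (a w)) (β * I * I) = 0 := by
    have : β * I * I = -β := by
      rw [mul_assoc, Complex.I_mul_I, mul_neg_one]
    rw [this, map_neg]; ring
  have e3 : ∀ (B : ℂ →L[ℝ] ℂ →L[ℝ] ℝ) (x : ℂ), B x x + B (x * I) (x * I)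
      = ‖x‖ ^ 2 * (B 1 1 + B I I) := by
    intro B x
    rw [Complex.sq_norm, Complex.normSq_apply]
    set p := x.re with hp
    set q := x.im with hq
    have h2 : x * I = (-q) • (1 : ℂ) + p • I := by
      apply Complex.ext <;> simp [hp, hq]
    have h1 : x = p • (1 : ℂ) + q • I := by
      rw [Complex.real_smul, Complex.real_smul, mul_one, Complex.re_add_im]
    rw [h2, h1]
    simp only [map_add, map_smul, ContinuousLinearMap.add_apply,
      ContinuousLinearMap.smul_apply, smul_eq_mul]
    ring
  have e4 : lap H (a w) = B2 1 1 + B2 I I := by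
    unfold lap
    rw [hlapH 1 1, hlapH I I]
  rw [e1, e2, e3 B2 α, e4, add_zero]

lemma lap_radial {φ d : ℝ → ℝ} {D' : ℝ} {z : ℂ}
    (hd : ∀ᶠ t in 𝓝 (Complex.normSq z), HasDerivAt φ (d t) t)
    (hd' : HasDerivAt d D' (Complex.normSq z)) :
    lap (fun ζ => φ (Complex.normSq ζ)) z =
      4 * (Complex.normSq z * D' + d (Complex.normSq z)) := by
  have hNS : ∀ ζ : ℂ, HasFDerivAt Complex.normSq
      ((2 * ζ.re) • (Complex.reCLM : ℂ →L[ℝ] ℝ) + (2 * ζ.im) • Complex.imCLM) ζ := by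
    intro ζ
    have h1 : HasFDerivAt (fun ζ : ℂ => ζ.re * ζ.re + ζ.im * ζ.im)
        ((ζ.re • (Complex.reCLM : ℂ →L[ℝ] ℝ) + ζ.re • Complex.reCLM)
          + (ζ.im • (Complex.imCLM : ℂ →L[ℝ] ℝ) + ζ.im • Complex.imCLM)) ζ :=
      (Complex.reCLM.hasFDerivAt.mul Complex.reCLM.hasFDerivAt).add
        (Complex.imCLM.hasFDerivAt.mul Complex.imCLM.hasFDerivAt)
    have he : Complex.normSq = fun ζ : ℂ => ζ.re * ζ.re + ζ.im * ζ.im :=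
      funext fun ζ => Complex.normSq_apply ζ
    rw [he]
    convert h1 using 1
    ext v <;> simp <;> ring
  have hNcont : ContinuousAt Complex.normSq z := Complex.continuous_normSq.continuousAt
  have hev : ∀ᶠ ζ in 𝓝 z, HasDerivAt φ (d (Complex.normSq ζ)) (Complex.normSq ζ) :=
    hNcont.eventually hd
  have key : ∀ v : ℂ, (fun ζ => fderiv ℝ (fun ζ => φ (Complex.normSq ζ)) ζ v)
      =ᶠ[𝓝 z] (fun ζ => d (Complex.normSq ζ) * (2 * ζ.re * v.re + 2 * ζ.im * v.im)) := by
    intro v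
    filter_upwards [hev] with ζ hζ
    have h := hζ.comp_hasFDerivAt ζ (hNS ζ)
    have h' : HasFDerivAt (fun ζ => φ (Complex.normSq ζ))
        (d (Complex.normSq ζ) • ((2 * ζ.re) • (Complex.reCLM : ℂ →L[ℝ] ℝ) + (2 * ζ.im) • Complex.imCLM)) ζ := h
    rw [h'.fderiv]
    simp [smul_eq_mul]
    ring
  have hdN : HasFDerivAt (fun ζ : ℂ => d (Complex.normSq ζ))
      (D' • ((2 * z.re) • (Complex.reCLM : ℂ →L[ℝ] ℝ) + (2 * z.im) • Complex.imCLM)) z :=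
    hd'.comp_hasFDerivAt z (hNS z)
  -- direction 1
  have g1 : HasFDerivAt (fun ζ : ℂ => d (Complex.normSq ζ) * (2 * ζ.re * 1 + 2 * ζ.im * 0))
      ((d (Complex.normSq z)) • ((2:ℝ) • (Complex.reCLM : ℂ →L[ℝ] ℝ))
        + (2 * z.re * 1 + 2 * z.im * 0) • (D' • ((2 * z.re) • (Complex.reCLM : ℂ →L[ℝ] ℝ) + (2 * z.im) • Complex.imCLM))) z := by
    have hre : HasFDerivAt (fun ζ : ℂ => 2 * ζ.re * 1 + 2 * ζ.im * 0)
        ((2:ℝ) • (Complex.reCLM : ℂ →L[ℝ] ℝ)) z := by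
      have := Complex.reCLM.hasFDerivAt (x := z)
      refine ((this.const_mul (2:ℝ)).mul_const 1 |>.add (((Complex.imCLM.hasFDerivAt (x := z)).const_mul (2:ℝ)).mul_const 0)).congr_fderiv ?_
      ext v <;> simp
    exact hdN.mul hre
  have g2 : HasFDerivAt (fun ζ : ℂ => d (Complex.normSq ζ) * (2 * ζ.re * 0 + 2 * ζ.im * 1))
      ((d (Complex.normSq z)) • ((2:ℝ) • (Complex.imCLM : ℂ →L[ℝ] ℝ))
        + (2 * z.re * 0 + 2 * z.im * 1) • (D' • ((2 * z.re) • (Complex.reCLM : ℂ →L[ℝ] ℝ) + (2 * z.im) • Complex.imCLM))) z := by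
    have him : HasFDerivAt (fun ζ : ℂ => 2 * ζ.re * 0 + 2 * ζ.im * 1)
        ((2:ℝ) • (Complex.imCLM : ℂ →L[ℝ] ℝ)) z := by
      have := Complex.imCLM.hasFDerivAt (x := z)
      refine (((Complex.reCLM.hasFDerivAt (x := z)).const_mul (2:ℝ)).mul_const 0 |>.add ((this.const_mul (2:ℝ)).mul_const 1)).congr_fderiv ?_
      ext v <;> simp
    exact hdN.mul him
  unfold lap
  rw [(key 1).fderiv_eq, (key I).fderiv_eq]
  have h1 : ((1:ℂ)).re = 1 ∧ ((1:ℂ)).im = 0 := by simp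
  simp only [Complex.one_re, Complex.one_im, Complex.I_re, Complex.I_im] at *
  rw [g1.fderiv, g2.fderiv]
  simp [smul_eq_mul, Complex.normSq_apply]
  ring

lemma lap_const_add_add {f g : ℂ → ℝ} {c : ℝ} {w : ℂ}
    (hf : ∀ᶠ z in 𝓝 w, ContDiffAt ℝ 2 f z) (hg : ∀ᶠ z in 𝓝 w, ContDiffAt ℝ 2 g z) :
    lap (fun z => c + (f z + g z)) w = lap f w + lap g w := by
  have key : ∀ v : ℂ, (fun z => fderiv ℝ (fun z => c + (f z + g z)) z v)
      =ᶠ[𝓝 w] (fun z => fderiv ℝ f z v + fderiv ℝ g z v) := by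
    intro v
    filter_upwards [hf, hg] with z hfz hgz
    have h1 : DifferentiableAt ℝ f z := hfz.differentiableAt (by norm_num)
    have h2 : DifferentiableAt ℝ g z := hgz.differentiableAt (by norm_num)
    rw [fderiv_const_add, fderiv_fun_add h1 h2]
    simp
  have hDf : ∀ v : ℂ, DifferentiableAt ℝ (fun z => fderiv ℝ f z v) w :=
    fun v => ((hf.self_of_nhds.fderiv_right (m := 1) (le_refl _)).differentiableAt
      one_ne_zero).clm_apply (differentiableAt_const v)
  have hDg : ∀ v : ℂ, DifferentiableAt ℝ (fun z => fderiv ℝ g z v) w :=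
    fun v => ((hg.self_of_nhds.fderiv_right (m := 1) (le_refl _)).differentiableAt
      one_ne_zero).clm_apply (differentiableAt_const v)
  unfold lap
  rw [(key 1).fderiv_eq, (key I).fderiv_eq, fderiv_fun_add (hDf 1) (hDg 1),
    fderiv_fun_add (hDf I) (hDg I)]
  simp
  ring

lemma contDiff_normSq2 : ContDiff ℝ 2 (Complex.normSq : ℂ → ℝ) := by
  have he : (Complex.normSq : ℂ → ℝ) = fun ζ : ℂ => ζ.re * ζ.re + ζ.im * ζ.im :=
    funext fun ζ => Complex.normSq_apply ζ
  rw [he]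
  exact (Complex.reCLM.contDiff.mul Complex.reCLM.contDiff).add
    (Complex.imCLM.contDiff.mul Complex.imCLM.contDiff)

/-- Gauss curvature of the θ-family: for holomorphic `a, μ` on open `U`
with `μ ≠ 0`, `|a| ≠ 1`, and `λ_θ = √(4|μ|²(1 − 2|a|²cos θ + |a|⁴))`, the Gauss curvature
`K(θ;w) = −(1/λ_θ²)Δ ln λ_θ` equals
`|a'|²((1+|a|⁴)cos θ − 2|a|²)/(|μ|²(1 − 2|a|²cos θ + |a|⁴)³)` at every `w ∈ U`. -/
theorem stmt_10 (U : Set ℂ) (hU : IsOpen U) (a μ : ℂ → ℂ)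
    (ha : ∀ w ∈ U, DifferentiableAt ℂ a w) (hμ : ∀ w ∈ U, DifferentiableAt ℂ μ w)
    (hμ0 : ∀ w ∈ U, μ w ≠ 0) (ha1 : ∀ w ∈ U, ‖a w‖ ≠ 1)
    (θ : ℝ) (lam : ℂ → ℝ)
    (hlam : ∀ w, lam w = Real.sqrt (4 * ‖μ w‖ ^ 2 *
      (1 - 2 * ‖a w‖ ^ 2 * Real.cos θ + ‖a w‖ ^ 4))) :
    ∀ w ∈ U,
      -(1 / (lam w) ^ 2) * lap (fun z => Real.log (lam z)) w =
        ‖deriv a w‖ ^ 2 *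
          ((1 + ‖a w‖ ^ 4) * Real.cos θ - 2 * ‖a w‖ ^ 2) /
          (‖μ w‖ ^ 2 *
            (1 - 2 * ‖a w‖ ^ 2 * Real.cos θ + ‖a w‖ ^ 4) ^ 3) := by
  intro w hw
  set c := Real.cos θ with hc
  -- basic eventual facts
  have evU : ∀ᶠ z in 𝓝 w, z ∈ U := hU.eventually_mem hw
  have ev_a : ∀ᶠ z in 𝓝 w, DifferentiableAt ℂ a z := evU.mono fun z hz => ha z hz
  have ev_μ : ∀ᶠ z in 𝓝 w, DifferentiableAt ℂ μ z := evU.mono fun z hz => hμ z hz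
  set T := Complex.normSq (a w) with hT
  set M := Complex.normSq (μ w) with hM
  set Q := 1 - 2 * T * c + T ^ 2 with hQ
  have hT0 : 0 ≤ T := Complex.normSq_nonneg _
  have hT1 : T ≠ 1 := by
    intro h
    apply ha1 w hw
    have : ‖a w‖ ^ 2 = 1 := by rw [Complex.sq_norm, ← hT, h]
    nlinarith [norm_nonneg (a w)]
  have hM0 : 0 < M := by
    rw [hM]; exact Complex.normSq_pos.2 (hμ0 w hw)
  have hQpos : ∀ t : ℝ, 0 ≤ t → t ≠ 1 → 0 < 1 - 2 * t * c + t ^ 2 := by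
    intro t ht ht1
    have hc1 : c ≤ 1 := Real.cos_le_one θ
    have h12 : 0 < (1 - t) ^ 2 := by rcases lt_or_gt_of_ne ht1 with h | h <;> nlinarith
    nlinarith
  have hQ0 : 0 < Q := hQpos T hT0 hT1
  -- continuity pull-backs
  have hcontμ : ContinuousAt (fun z => Complex.normSq (μ z)) w :=
    Complex.continuous_normSq.continuousAt.comp (ev_μ.self_of_nhds.continuousAt)
  have hconta : ContinuousAt (fun z => Complex.normSq (a z)) w :=
    Complex.continuous_normSq.continuousAt.comp (ev_a.self_of_nhds.continuousAt)
  have ev_Mpos : ∀ᶠ z in 𝓝 w, 0 < Complex.normSq (μ z) :=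
    hcontμ.eventually (eventually_gt_nhds hM0)
  have hQc : Continuous (fun x : ℝ => 1 - 2 * x * c + x ^ 2) := by continuity
  have hcontQ : ContinuousAt (fun z =>
      1 - 2 * Complex.normSq (a z) * c + Complex.normSq (a z) ^ 2) w :=
    hQc.continuousAt.comp hconta
  have ev_Qpos : ∀ᶠ z in 𝓝 w, 0 < 1 - 2 * Complex.normSq (a z) * c + Complex.normSq (a z) ^ 2 :=
    hcontQ.eventually (eventually_gt_nhds hQ0)
  -- the decomposition of log ∘ lam
  set φ₁ : ℝ → ℝ := fun t => (1 / 2) * Real.log t with hφ₁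
  set φ₂ : ℝ → ℝ := fun t => (1 / 2) * Real.log (1 - 2 * t * c + t ^ 2) with hφ₂
  have hev_eq : (fun z => Real.log (lam z)) =ᶠ[𝓝 w]
      (fun z => Real.log 2 + (φ₁ (Complex.normSq (μ z)) + φ₂ (Complex.normSq (a z)))) := by
    filter_upwards [ev_Mpos, ev_Qpos] with z h1 h2
    have habs2 : ‖μ z‖ ^ 2 = Complex.normSq (μ z) := Complex.sq_norm _
    have habs2a : ‖a z‖ ^ 2 = Complex.normSq (a z) := Complex.sq_norm _
    have habs4a : ‖a z‖ ^ 4 = Complex.normSq (a z) ^ 2 := by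
      rw [← habs2a]; ring
    rw [hlam z, habs2, habs2a, habs4a]
    have hpos : (0:ℝ) < 4 * Complex.normSq (μ z) *
        (1 - 2 * Complex.normSq (a z) * c + Complex.normSq (a z) ^ 2) := by positivity
    rw [Real.log_sqrt (le_of_lt hpos)]
    rw [Real.log_mul (by positivity) (ne_of_gt h2), Real.log_mul (by norm_num) (ne_of_gt h1)]
    have h4 : Real.log 4 = 2 * Real.log 2 := by
      rw [show (4:ℝ) = 2 ^ 2 by norm_num, Real.log_pow]; norm_num
    rw [h4, hφ₁, hφ₂]
    ring
  rw [lap_congr hev_eq]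
  -- smoothness of the two pieces
  have hμan : ∀ᶠ z in 𝓝 w, ContDiffAt ℝ 2 μ z := by
    filter_upwards [evU] with z hz
    have : AnalyticAt ℂ μ z := Complex.analyticAt_iff_eventually_differentiableAt.2
      ((hU.eventually_mem hz).mono fun x hx => hμ x hx)
    exact (this.contDiffAt).restrict_scalars ℝ
  have haan : ∀ᶠ z in 𝓝 w, ContDiffAt ℝ 2 a z := by
    filter_upwards [evU] with z hz
    have : AnalyticAt ℂ a z := Complex.analyticAt_iff_eventually_differentiableAt.2
      ((hU.eventually_mem hz).mono fun x hx => ha x hx)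
    exact (this.contDiffAt).restrict_scalars ℝ
  have hφ₁cd : ∀ t : ℝ, t ≠ 0 → ContDiffAt ℝ 2 φ₁ t := fun t ht =>
    contDiffAt_const.mul (Real.contDiffAt_log.2 ht)
  have hφ₂cd : ∀ t : ℝ, (1 - 2 * t * c + t ^ 2) ≠ 0 → ContDiffAt ℝ 2 φ₂ t := by
    intro t ht
    apply contDiffAt_const.mul
    exact (Real.contDiffAt_log.2 ht).comp t (f := fun t : ℝ => 1 - 2 * t * c + t ^ 2) (by fun_prop)
  have hf : ∀ᶠ z in 𝓝 w, ContDiffAt ℝ 2 (fun z => φ₁ (Complex.normSq (μ z))) z := by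
    filter_upwards [hμan, ev_Mpos] with z h1 h2
    exact (hφ₁cd _ (ne_of_gt h2)).comp (f := fun z => Complex.normSq (μ z)) z ((contDiff_normSq2.contDiffAt).comp z h1)
  have hg : ∀ᶠ z in 𝓝 w, ContDiffAt ℝ 2 (fun z => φ₂ (Complex.normSq (a z))) z := by
    filter_upwards [haan, ev_Qpos] with z h1 h2
    exact (hφ₂cd _ (ne_of_gt h2)).comp (f := fun z => Complex.normSq (a z)) z ((contDiff_normSq2.contDiffAt).comp z h1)
  rw [lap_const_add_add hf hg]
  -- Laplacian of the μ-part
  have hH₁ : ∀ᶠ ζ in 𝓝 (μ w), ContDiffAt ℝ 2 (fun ζ => φ₁ (Complex.normSq ζ)) ζ := by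
    have : ∀ᶠ ζ in 𝓝 (μ w), 0 < Complex.normSq ζ :=
      Complex.continuous_normSq.continuousAt.eventually (eventually_gt_nhds hM0)
    filter_upwards [this] with ζ hζ
    exact (hφ₁cd _ (ne_of_gt hζ)).comp ζ contDiff_normSq2.contDiffAt
  have hlapμ : lap (fun z => φ₁ (Complex.normSq (μ z))) w = 0 := by
    rw [lap_comp_holo ev_μ hH₁]
    have hrad : lap (fun ζ => φ₁ (Complex.normSq ζ)) (μ w)
        = 4 * (M * ((1/2) * (-(M ^ 2)⁻¹)) + (1/2) * M⁻¹) := by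
      apply lap_radial (d := fun t => (1/2) * t⁻¹)
      · filter_upwards [eventually_gt_nhds hM0] with t ht
        exact (Real.hasDerivAt_log (ne_of_gt ht)).const_mul (1/2)
      · exact (hasDerivAt_inv (ne_of_gt hM0)).const_mul (1/2)
    rw [hrad]
    have : M * ((1/2) * (-(M ^ 2)⁻¹)) + (1/2) * M⁻¹ = 0 := by
      field_simp
      ring
    rw [this]; ring
  -- Laplacian of the a-part
  have hH₂ : ∀ᶠ ζ in 𝓝 (a w), ContDiffAt ℝ 2 (fun ζ => φ₂ (Complex.normSq ζ)) ζ := by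
    have hco : ContinuousAt (fun ζ : ℂ =>
        1 - 2 * Complex.normSq ζ * c + Complex.normSq ζ ^ 2) (a w) :=
      hQc.continuousAt.comp Complex.continuous_normSq.continuousAt
    filter_upwards [hco.eventually (eventually_gt_nhds hQ0)] with ζ hζ
    exact (hφ₂cd _ (ne_of_gt hζ)).comp ζ contDiff_normSq2.contDiffAt
  have hPder : ∀ t : ℝ, HasDerivAt (fun t : ℝ => 1 - 2 * t * c + t ^ 2) (-(2 * c) + 2 * t) t := by
    intro t
    have h1 := (((hasDerivAt_id t).const_mul 2).mul_const c).const_sub 1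
    have h2 := hasDerivAt_pow 2 t
    have := h1.add h2
    exact this.congr_deriv (by ring)
  set d₂ : ℝ → ℝ := fun t => (1/2) * ((-(2 * c) + 2 * t) / (1 - 2 * t * c + t ^ 2)) with hd₂def
  set D₂ : ℝ := (1/2) * ((2 * Q - (-(2 * c) + 2 * T) * (-(2 * c) + 2 * T)) / Q ^ 2) with hD₂def
  have hlapa : lap (fun z => φ₂ (Complex.normSq (a z))) w
      = ‖deriv a w‖ ^ 2 * (4 * (T * D₂ + d₂ T)) := by
    rw [lap_comp_holo ev_a hH₂]
    congr 1
    apply lap_radial (φ := φ₂) (d := d₂) (D' := D₂)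
    · have hcoP : ContinuousAt (fun t : ℝ => 1 - 2 * t * c + t ^ 2) T := hQc.continuousAt
      filter_upwards [hcoP.eventually (eventually_gt_nhds hQ0)] with t ht
      exact ((hPder t).log (ne_of_gt ht)).const_mul (1/2)
    · have hA : HasDerivAt (fun t : ℝ => -(2 * c) + 2 * t) 2 T := by
        exact ((hasDerivAt_const T (-(2*c))).add ((hasDerivAt_id T).const_mul 2)).congr_deriv (by simp)
      exact (hA.div (hPder T) (ne_of_gt hQ0)).const_mul (1/2)
  rw [hlapμ, hlapa, zero_add]
  -- final arithmetic
  have habs2a : ‖a w‖ ^ 2 = T := by rw [hT, Complex.sq_norm]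
  have habs4a : ‖a w‖ ^ 4 = T ^ 2 := by rw [← habs2a]; ring
  have habs2μ : ‖μ w‖ ^ 2 = M := by rw [hM, Complex.sq_norm]
  have hlamsq : lam w ^ 2 = 4 * M * Q := by
    have hexpr : 4 * ‖μ w‖ ^ 2 *
        (1 - 2 * ‖a w‖ ^ 2 * c + ‖a w‖ ^ 4) = 4 * M * Q := by
      rw [habs2a, habs4a, habs2μ, ← hQ]
    rw [hlam w, hexpr, Real.sq_sqrt (by positivity)]
  rw [hlamsq]
  rw [habs2a, habs4a, habs2μ, hD₂def, hd₂def]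
  simp only [hQ]
  have hQne : (1 - 2 * T * c + T ^ 2) ≠ 0 := by rw [← hQ]; exact ne_of_gt hQ0
  have hMne : M ≠ 0 := ne_of_gt hM0
  field_simp
  ring
end

section
/- (Curvature at θ = 0: the surface in ℝ³₁) Let U ⊆ ℂ be open, and let a, μ : U → ℂ be holomorphic with μ(w) ≠ 0 and |a(w)| < 1 for all w ∈ U. Set λ₀(w) = √(4|μ(w)|²(1 − |a(w)|²)²) > 0. Then the Gauss curvature K(0;w) = −(1/λ₀²) Δ ln λ₀ satisfies K(0;w) = |a'(w)|²/(|μ(w)|²(1 − |a(w)|²)⁴) ≥ 0 for all w ∈ U, and K(0;w) = 0 if and only if a'(w) = 0; that is, the planar points of the minimal spacelike surface F(0;·) ⊂ ℝ³₁ are exactly the zeros of a'. -/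
open Complex ComplexConjugate

noncomputable def Gd (h : ℂ → ℂ) (c ε : ℝ) (e z : ℂ) : ℝ :=
  ε * (2 * (h z).re * (deriv h z * e).re + 2 * (h z).im * (deriv h z * e).im) /
    (c + ε * Complex.normSq (h z))

theorem term_hasFDerivAt (h : ℂ → ℂ) (c ε : ℝ) {z : ℂ}
    (hz : DifferentiableAt ℂ h z) (hpos : 0 < c + ε * Complex.normSq (h z)) :
    ∃ L : ℂ →L[ℝ] ℝ,
      HasFDerivAt (fun y => Real.log (c + ε * Complex.normSq (h y))) L z ∧
      ∀ e, L e = Gd h c ε e z := by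
  have hd : HasFDerivAt h (deriv h z • (1 : ℂ →L[ℝ] ℂ)) z :=
    hz.hasDerivAt.complexToReal_fderiv
  have hA : HasFDerivAt (fun y => (h y).re)
      (Complex.reCLM.comp (deriv h z • (1 : ℂ →L[ℝ] ℂ))) z :=
    (Complex.reCLM.hasFDerivAt).comp z hd
  have hB : HasFDerivAt (fun y => (h y).im)
      (Complex.imCLM.comp (deriv h z • (1 : ℂ →L[ℝ] ℂ))) z :=
    (Complex.imCLM.hasFDerivAt).comp z hd
  have hR : HasFDerivAt (fun y => Complex.normSq (h y))
      ((h z).re • (Complex.reCLM.comp (deriv h z • (1 : ℂ →L[ℝ] ℂ)))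
        + (h z).re • (Complex.reCLM.comp (deriv h z • (1 : ℂ →L[ℝ] ℂ)))
        + ((h z).im • (Complex.imCLM.comp (deriv h z • (1 : ℂ →L[ℝ] ℂ)))
          + (h z).im • (Complex.imCLM.comp (deriv h z • (1 : ℂ →L[ℝ] ℂ))))) z := by
    simpa only [Pi.mul_def, Pi.add_def, ← Complex.normSq_apply] using (hA.mul hA).add (hB.mul hB)
  have hρ := (hR.const_mul ε).const_add c
  have hf := hρ.log (ne_of_gt hpos)
  refine ⟨_, hf, fun e => ?_⟩
  have hρ0 : (c + ε * Complex.normSq (h z)) ≠ 0 := ne_of_gt hpos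
  simp only [Gd, ContinuousLinearMap.smul_apply, ContinuousLinearMap.add_apply,
    ContinuousLinearMap.coe_comp', Function.comp_apply, ContinuousLinearMap.one_apply,
    smul_eq_mul, Complex.reCLM_apply, Complex.imCLM_apply, Complex.real_smul]
  field_simp
  ring_nf

set_option maxHeartbeats 2000000 in
theorem Gd_hasFDerivAt (h : ℂ → ℂ) (c ε : ℝ) (e : ℂ) {s : Set ℂ} (hs : IsOpen s) {w : ℂ}
    (hw : w ∈ s) (hh : ∀ z ∈ s, DifferentiableAt ℂ h z)
    (hpos : 0 < c + ε * Complex.normSq (h w)) :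
    ∃ M : ℂ →L[ℝ] ℝ, HasFDerivAt (Gd h c ε e) M w ∧ ∀ e' : ℂ,
      M e' = (ε * (2 * (deriv h w * e').re * (deriv h w * e).re
                + 2 * (h w).re * (deriv (deriv h) w * e * e').re
                + 2 * (deriv h w * e').im * (deriv h w * e).im
                + 2 * (h w).im * (deriv (deriv h) w * e * e').im)
              * (c + ε * Complex.normSq (h w))
            - (ε * (2 * (h w).re * (deriv h w * e).re + 2 * (h w).im * (deriv h w * e).im))
              * (ε * (2 * (h w).re * (deriv h w * e').re + 2 * (h w).im * (deriv h w * e').im)))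
            / (c + ε * Complex.normSq (h w)) ^ 2 := by
  have hdo : DifferentiableOn ℂ h s := fun z hz => (hh z hz).differentiableWithinAt
  have han : AnalyticOnNhd ℂ h s := hdo.analyticOnNhd hs
  have hd2diff : DifferentiableAt ℂ (deriv h) w :=
    ((han.deriv_of_isOpen hs) w hw).differentiableAt
  have hd : HasFDerivAt h (deriv h w • (1 : ℂ →L[ℝ] ℂ)) w :=
    (hh w hw).hasDerivAt.complexToReal_fderiv
  have hd2 : HasFDerivAt (deriv h) (deriv (deriv h) w • (1 : ℂ →L[ℝ] ℂ)) w :=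
    hd2diff.hasDerivAt.complexToReal_fderiv
  have hA := (Complex.reCLM.hasFDerivAt).comp w hd
  have hB := (Complex.imCLM.hasFDerivAt).comp w hd
  have hPe := hd2.mul_const e
  have hP := (Complex.reCLM.hasFDerivAt).comp w hPe
  have hQ := (Complex.imCLM.hasFDerivAt).comp w hPe
  simp only [Function.comp_def, Complex.reCLM_apply, Complex.imCLM_apply] at hA hB hP hQ
  have hn := (((hA.const_mul (2:ℝ)).mul hP).add ((hB.const_mul (2:ℝ)).mul hQ)).const_mul ε
  have hR : HasFDerivAt (fun y => Complex.normSq (h y))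
      ((h w).re • (Complex.reCLM.comp (deriv h w • (1 : ℂ →L[ℝ] ℂ)))
        + (h w).re • (Complex.reCLM.comp (deriv h w • (1 : ℂ →L[ℝ] ℂ)))
        + ((h w).im • (Complex.imCLM.comp (deriv h w • (1 : ℂ →L[ℝ] ℂ)))
          + (h w).im • (Complex.imCLM.comp (deriv h w • (1 : ℂ →L[ℝ] ℂ))))) w := by
    simpa only [Pi.mul_def, Pi.add_def, ← Complex.normSq_apply] using (hA.mul hA).add (hB.mul hB)
  have hρ := (hR.const_mul ε).const_add c
  have hinv := (hasDerivAt_inv (ne_of_gt hpos)).comp_hasFDerivAt w hρ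
  simp only [Function.comp_def] at hinv
  have hG := hn.mul hinv
  have hρ0 : (c + ε * Complex.normSq (h w)) ≠ 0 := ne_of_gt hpos
  have heq : Gd h c ε e = fun y =>
      ε * (2 * (h y).re * (deriv h y * e).re + 2 * (h y).im * (deriv h y * e).im) *
        (c + ε * Complex.normSq (h y))⁻¹ := by
    funext y; rw [Gd, div_eq_mul_inv]
  simp only [Pi.mul_def, Pi.add_def] at hG
  rw [← heq] at hG
  refine ⟨_, hG, fun e' => ?_⟩
  simp only [ContinuousLinearMap.smul_apply, ContinuousLinearMap.add_apply,
    ContinuousLinearMap.coe_comp', Function.comp_apply, ContinuousLinearMap.one_apply,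
    smul_eq_mul, Complex.reCLM_apply, Complex.imCLM_apply]
  field_simp
  ring_nf

theorem lap_congr_s11 {f g : ℂ → ℝ} {s : Set ℂ} (hs : IsOpen s) {w : ℂ} (hw : w ∈ s)
    (hfg : ∀ z ∈ s, f z = g z) : lap f w = lap g w := by
  have h1 : ∀ z ∈ s, fderiv ℝ f z = fderiv ℝ g z := fun z hz =>
    Filter.EventuallyEq.fderiv_eq (Filter.eventuallyEq_of_mem (hs.mem_nhds hz) hfg)
  have h2 : ∀ e : ℂ, (fun z => fderiv ℝ f z e) =ᶠ[nhds w] (fun z => fderiv ℝ g z e) :=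
    fun e => Filter.eventuallyEq_of_mem (hs.mem_nhds hw) (fun z hz => by rw [h1 z hz])
  unfold lap
  rw [(h2 1).fderiv_eq, (h2 Complex.I).fderiv_eq]

set_option maxHeartbeats 2000000 in
theorem lap_two_log (h₁ h₂ : ℂ → ℂ) (k b₁ b₂ c₁ ε₁ c₂ ε₂ : ℝ) {s : Set ℂ} (hs : IsOpen s)
    {w : ℂ} (hw : w ∈ s)
    (hh₁ : ∀ z ∈ s, DifferentiableAt ℂ h₁ z) (hh₂ : ∀ z ∈ s, DifferentiableAt ℂ h₂ z)
    (hp₁ : ∀ z ∈ s, 0 < c₁ + ε₁ * Complex.normSq (h₁ z))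
    (hp₂ : ∀ z ∈ s, 0 < c₂ + ε₂ * Complex.normSq (h₂ z)) :
    lap (fun z => k + b₁ * Real.log (c₁ + ε₁ * Complex.normSq (h₁ z))
          + b₂ * Real.log (c₂ + ε₂ * Complex.normSq (h₂ z))) w =
      b₁ * ((4 * ε₁ * Complex.normSq (deriv h₁ w) * (c₁ + ε₁ * Complex.normSq (h₁ w))
          - 4 * ε₁ ^ 2 * Complex.normSq (h₁ w) * Complex.normSq (deriv h₁ w))
          / (c₁ + ε₁ * Complex.normSq (h₁ w)) ^ 2)
      + b₂ * ((4 * ε₂ * Complex.normSq (deriv h₂ w) * (c₂ + ε₂ * Complex.normSq (h₂ w))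
          - 4 * ε₂ ^ 2 * Complex.normSq (h₂ w) * Complex.normSq (deriv h₂ w))
          / (c₂ + ε₂ * Complex.normSq (h₂ w)) ^ 2) := by
  have key : ∀ (e : ℂ), ∀ z ∈ s,
      fderiv ℝ (fun z => k + b₁ * Real.log (c₁ + ε₁ * Complex.normSq (h₁ z))
        + b₂ * Real.log (c₂ + ε₂ * Complex.normSq (h₂ z))) z e
      = b₁ * Gd h₁ c₁ ε₁ e z + b₂ * Gd h₂ c₂ ε₂ e z := by
    intro e z hz
    obtain ⟨L₁, hL₁, hv₁⟩ := term_hasFDerivAt h₁ c₁ ε₁ (hh₁ z hz) (hp₁ z hz)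
    obtain ⟨L₂, hL₂, hv₂⟩ := term_hasFDerivAt h₂ c₂ ε₂ (hh₂ z hz) (hp₂ z hz)
    have hF := (((hL₁.const_mul b₁).const_add k).add (hL₂.const_mul b₂))
    simp only [Pi.add_def] at hF
    rw [hF.fderiv]
    simp [hv₁, hv₂]
  have dir : ∀ e : ℂ,
      fderiv ℝ (fun z => fderiv ℝ (fun z => k + b₁ * Real.log (c₁ + ε₁ * Complex.normSq (h₁ z))
        + b₂ * Real.log (c₂ + ε₂ * Complex.normSq (h₂ z))) z e) w e
      = b₁ * ((ε₁ * (2 * (deriv h₁ w * e).re * (deriv h₁ w * e).re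
                + 2 * (h₁ w).re * (deriv (deriv h₁) w * e * e).re
                + 2 * (deriv h₁ w * e).im * (deriv h₁ w * e).im
                + 2 * (h₁ w).im * (deriv (deriv h₁) w * e * e).im)
              * (c₁ + ε₁ * Complex.normSq (h₁ w))
            - (ε₁ * (2 * (h₁ w).re * (deriv h₁ w * e).re + 2 * (h₁ w).im * (deriv h₁ w * e).im))
              * (ε₁ * (2 * (h₁ w).re * (deriv h₁ w * e).re + 2 * (h₁ w).im * (deriv h₁ w * e).im)))
            / (c₁ + ε₁ * Complex.normSq (h₁ w)) ^ 2)
      + b₂ * ((ε₂ * (2 * (deriv h₂ w * e).re * (deriv h₂ w * e).re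
                + 2 * (h₂ w).re * (deriv (deriv h₂) w * e * e).re
                + 2 * (deriv h₂ w * e).im * (deriv h₂ w * e).im
                + 2 * (h₂ w).im * (deriv (deriv h₂) w * e * e).im)
              * (c₂ + ε₂ * Complex.normSq (h₂ w))
            - (ε₂ * (2 * (h₂ w).re * (deriv h₂ w * e).re + 2 * (h₂ w).im * (deriv h₂ w * e).im))
              * (ε₂ * (2 * (h₂ w).re * (deriv h₂ w * e).re + 2 * (h₂ w).im * (deriv h₂ w * e).im)))
            / (c₂ + ε₂ * Complex.normSq (h₂ w)) ^ 2) := by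
    intro e
    obtain ⟨M₁, hM₁, hw₁⟩ := Gd_hasFDerivAt h₁ c₁ ε₁ e hs hw hh₁ (hp₁ w hw)
    obtain ⟨M₂, hM₂, hw₂⟩ := Gd_hasFDerivAt h₂ c₂ ε₂ e hs hw hh₂ (hp₂ w hw)
    have hsum := (hM₁.const_mul b₁).add (hM₂.const_mul b₂)
    have heq : (fun z => fderiv ℝ (fun z => k + b₁ * Real.log (c₁ + ε₁ * Complex.normSq (h₁ z))
        + b₂ * Real.log (c₂ + ε₂ * Complex.normSq (h₂ z))) z e)
        =ᶠ[nhds w] (fun z => b₁ * Gd h₁ c₁ ε₁ e z + b₂ * Gd h₂ c₂ ε₂ e z) :=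
      Filter.eventuallyEq_of_mem (hs.mem_nhds hw) (fun z hz => key e z hz)
    simp only [Pi.add_def] at hsum
    rw [heq.fderiv_eq, hsum.fderiv]
    simp only [ContinuousLinearMap.add_apply, ContinuousLinearMap.smul_apply, smul_eq_mul,
      hw₁ e, hw₂ e]
  have hρ₁ : (c₁ + ε₁ * Complex.normSq (h₁ w)) ≠ 0 := ne_of_gt (hp₁ w hw)
  have hρ₂ : (c₂ + ε₂ * Complex.normSq (h₂ w)) ≠ 0 := ne_of_gt (hp₂ w hw)
  unfold lap
  rw [dir 1, dir Complex.I]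
  simp only [Complex.mul_re, Complex.mul_im, Complex.one_re, Complex.one_im,
    Complex.I_re, Complex.I_im, Complex.normSq_apply]
  field_simp
  ring

/-- curvature at θ = 0, the surface in ℝ³₁: for holomorphic `a, μ` on
open `U` with `μ ≠ 0`, `|a| < 1`, and `λ₀ = √(4|μ|²(1−|a|²)²)`, the Gauss curvature
`K(0;w) = −(1/λ₀²)Δ ln λ₀` satisfies `K(0;w) = |a'|²/(|μ|²(1−|a|²)⁴) ≥ 0`, and
`K(0;w) = 0 ↔ a'(w) = 0` (planar points are exactly the zeros of `a'`). -/
theorem stmt_11 (U : Set ℂ) (hU : IsOpen U) (a μ : ℂ → ℂ)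
    (ha : ∀ w ∈ U, DifferentiableAt ℂ a w) (hμ : ∀ w ∈ U, DifferentiableAt ℂ μ w)
    (hμ0 : ∀ w ∈ U, μ w ≠ 0) (ha1 : ∀ w ∈ U, ‖a w‖ < 1)
    (lam : ℂ → ℝ)
    (hlam : ∀ w, lam w =
      Real.sqrt (4 * ‖μ w‖ ^ 2 * (1 - ‖a w‖ ^ 2) ^ 2)) :
    ∀ w ∈ U,
      -(1 / (lam w) ^ 2) * lap (fun z => Real.log (lam z)) w =
        ‖deriv a w‖ ^ 2 /
          (‖μ w‖ ^ 2 * (1 - ‖a w‖ ^ 2) ^ 4) ∧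
      0 ≤ -(1 / (lam w) ^ 2) * lap (fun z => Real.log (lam z)) w ∧
      (-(1 / (lam w) ^ 2) * lap (fun z => Real.log (lam z)) w = 0 ↔ deriv a w = 0) := by
  intro w hw
  have hp₁ : ∀ z ∈ U, (0:ℝ) < 0 + 1 * Complex.normSq (μ z) := by
    intro z hz
    simpa using Complex.normSq_pos.mpr (hμ0 z hz)
  have hp₂ : ∀ z ∈ U, (0:ℝ) < 1 + (-1) * Complex.normSq (a z) := by
    intro z hz
    have h1 := ha1 z hz
    have h2 : Complex.normSq (a z) < 1 := by
      rw [← Complex.sq_norm]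
      nlinarith [norm_nonneg (a z)]
    linarith
  have hlog : ∀ z ∈ U, Real.log (lam z)
      = Real.log 2 + (1/2) * Real.log (0 + 1 * Complex.normSq (μ z))
        + 1 * Real.log (1 + (-1) * Complex.normSq (a z)) := by
    intro z hz
    have hμz : 0 < ‖μ z‖ := norm_pos_iff.mpr (hμ0 z hz)
    have haz : 0 < 1 - ‖a z‖ ^ 2 := by
      nlinarith [ha1 z hz, norm_nonneg (a z)]
    have hsq : 4 * ‖μ z‖ ^ 2 * (1 - ‖a z‖ ^ 2) ^ 2
        = (2 * ‖μ z‖ * (1 - ‖a z‖ ^ 2)) ^ 2 := by ring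
    have hpos2 : (0:ℝ) < 2 * ‖μ z‖ * (1 - ‖a z‖ ^ 2) := by positivity
    rw [hlam z, hsq, Real.sqrt_sq hpos2.le,
      Real.log_mul (by positivity) (ne_of_gt haz),
      Real.log_mul (by norm_num) (ne_of_gt hμz)]
    have habs : Real.log (‖μ z‖) = (1/2) * Real.log (Complex.normSq (μ z)) := by
      rw [← Complex.sq_norm, Real.log_pow]
      push_cast; ring
    rw [habs, ← Complex.sq_norm (a z)]
    ring_nf
  have hRμ : (0:ℝ) < Complex.normSq (μ w) := Complex.normSq_pos.mpr (hμ0 w hw)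
  have hRa : Complex.normSq (a w) < 1 := by
    have := hp₂ w hw; linarith
  have hρa : (0:ℝ) < 1 - Complex.normSq (a w) := by linarith
  have hlapval : lap (fun z => Real.log (lam z)) w
      = -4 * Complex.normSq (deriv a w) / (1 - Complex.normSq (a w)) ^ 2 := by
    rw [lap_congr_s11 hU hw hlog,
      lap_two_log μ a (Real.log 2) (1/2) 1 0 1 1 (-1) hU hw hμ ha hp₁ hp₂]
    have hne : (1 : ℝ) - Complex.normSq (a w) ≠ 0 := ne_of_gt hρa
    have hRμ' : Complex.normSq (μ w) ≠ 0 := ne_of_gt hRμ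
    have e0 : (0:ℝ) + 1 * Complex.normSq (μ w) = Complex.normSq (μ w) := by ring
    have e1 : (1:ℝ) + (-1) * Complex.normSq (a w) = 1 - Complex.normSq (a w) := by ring
    rw [e0, e1]
    field_simp
    ring
  have hlam2 : (lam w) ^ 2 = 4 * Complex.normSq (μ w) * (1 - Complex.normSq (a w)) ^ 2 := by
    rw [hlam w, Real.sq_sqrt (by positivity), ← Complex.sq_norm (μ w), ← Complex.sq_norm (a w)]
  have hK : -(1 / (lam w) ^ 2) * lap (fun z => Real.log (lam z)) w =
      ‖deriv a w‖ ^ 2 /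
        (‖μ w‖ ^ 2 * (1 - ‖a w‖ ^ 2) ^ 4) := by
    rw [hlapval, hlam2, Complex.sq_norm, Complex.sq_norm, Complex.sq_norm]
    have hne : (1 - Complex.normSq (a w)) ≠ 0 := ne_of_gt hρa
    field_simp
  refine ⟨hK, ?_, ?_⟩
  · rw [hK]; positivity
  · rw [hK]
    constructor
    · intro h
      have hden : ‖μ w‖ ^ 2 * (1 - ‖a w‖ ^ 2) ^ 4 ≠ 0 := by
        have : (0:ℝ) < ‖μ w‖ ^ 2 * (1 - ‖a w‖ ^ 2) ^ 4 := by
          rw [Complex.sq_norm, Complex.sq_norm]; positivity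
        exact ne_of_gt this
      have := (div_eq_zero_iff.mp h).resolve_right hden
      have h0 : ‖deriv a w‖ = 0 := by
        nlinarith [norm_nonneg (deriv a w)]
      exact norm_eq_zero.mp h0
    · intro h
      rw [h]
      simp
end

section
/- (Lemma 3.6) Let U ⊆ ℂ be a nonempty connected open set, and let a, μ : U → ℂ be holomorphic with μ(w) ≠ 0 and |a(w)| ≠ 1 for all w ∈ U. For θ ∈ ℝ and w ∈ U define K(θ;w) = |a'(w)|²((1 + |a(w)|⁴)cos θ − 2|a(w)|²)/(|μ(w)|²(1 − 2|a(w)|²cos θ + |a(w)|⁴)³). Then the following are equivalent: (1) there exists θ₀ ∈ ℝ such that K(θ₀;w) = 0 for every w ∈ U; (2) the function a is constant on U; (3) the maps w ↦ L₃(a(w)) and, for every θ ∈ ℝ, w ↦ L₀(e^{iθ}a(w)) are constant on U; (4) for every θ ∈ ℝ and every w ∈ U, K(θ;w) = 0 (i.e., every point of every surface of the θ-family is planar). -/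
open Complex ComplexConjugate

/-- A function with vanishing derivative on a ball is constant there. -/
lemma const_of_deriv_zero_ball {f : ℂ → ℂ} {w : ℂ} {ε : ℝ}
    (hf : ∀ z ∈ Metric.ball w ε, DifferentiableAt ℂ f z)
    (hd : ∀ z ∈ Metric.ball w ε, deriv f z = 0) :
    ∀ z ∈ Metric.ball w ε, f z = f w := by
  intro z hz
  have hwB : w ∈ Metric.ball w ε := Metric.mem_ball_self (Metric.pos_of_mem_ball hz)
  refine (convex_ball w ε).is_const_of_fderivWithin_eq_zero
    (fun x hx => (hf x hx).differentiableWithinAt) (fun x hx => ?_) hz hwB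
  rw [fderivWithin_of_isOpen Metric.isOpen_ball hx, ← toSpanSingleton_deriv, hd x hx]
  ext
  simp

/-- Lemma 3.6: for holomorphic data `a, μ` on a nonempty connected open
`U` with `μ ≠ 0` and `|a| ≠ 1`, and `K(θ;w)` the Gauss curvature of the θ-family, the
following are equivalent: (1) some member `θ₀` has `K(θ₀;·) ≡ 0` on `U`; (2) `a` is
constant on `U`; (3) `w ↦ L₃(a(w))` and, for every `θ`, `w ↦ L₀(e^{iθ}a(w))` are
constant on `U`; (4) every point of every member of the family is planar. -/
theorem stmt_16 (U : Set ℂ) (hU : IsOpen U) (hconn : IsConnected U)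
    (a μ : ℂ → ℂ)
    (ha : ∀ w ∈ U, DifferentiableAt ℂ a w) (hμ : ∀ w ∈ U, DifferentiableAt ℂ μ w)
    (hμ0 : ∀ w ∈ U, μ w ≠ 0) (ha1 : ∀ w ∈ U, ‖a w‖ ≠ 1)
    (K : ℝ → ℂ → ℝ)
    (hK : ∀ θ w, K θ w =
      ‖deriv a w‖ ^ 2 *
        ((1 + ‖a w‖ ^ 4) * Real.cos θ - 2 * ‖a w‖ ^ 2) /
        (‖μ w‖ ^ 2 *
          (1 - 2 * ‖a w‖ ^ 2 * Real.cos θ + ‖a w‖ ^ 4) ^ 3)) :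
    List.TFAE
      [∃ θ0 : ℝ, ∀ w ∈ U, K θ0 w = 0,
       ∀ w ∈ U, ∀ w' ∈ U, a w = a w',
       (∀ w ∈ U, ∀ w' ∈ U, L3 (a w) = L3 (a w')) ∧
         (∀ θ : ℝ, ∀ w ∈ U, ∀ w' ∈ U, L0 θ (a w) = L0 θ (a w')),
       ∀ θ : ℝ, ∀ w ∈ U, K θ w = 0] := by
  tfae_have 2 → 3 := by
    intro h
    exact ⟨fun w hw w' hw' => by rw [h w hw w' hw'],
      fun θ w hw w' hw' => by rw [h w hw w' hw']⟩
  tfae_have 3 → 2 := by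
    rintro ⟨h3, -⟩ w hw w' hw'
    have h := h3 w hw w' hw'
    have h1 := congrFun h 1
    have h2 := congrFun h 2
    simp only [L3, Matrix.cons_val_zero, Matrix.cons_val_one, Matrix.head_cons, Matrix.cons_val_two,
      Matrix.tail_cons] at h1 h2
    have h2' : a w - conj (a w) = a w' - conj (a w') :=
      mul_left_cancel₀ (neg_ne_zero.mpr I_ne_zero) h2
    linear_combination (h1 + h2') / 2
  tfae_have 2 → 4 := by
    intro h θ w hw
    have hev : a =ᶠ[nhds w] fun _ => a w :=
      Filter.eventuallyEq_of_mem (hU.mem_nhds hw) (fun z hz => h z hz w hw)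
    have hd : deriv a w = 0 := by rw [hev.deriv_eq]; exact deriv_const w _
    rw [hK, hd]
    simp
  tfae_have 4 → 1 := fun h => ⟨0, fun w hw => h 0 w hw⟩
  tfae_have 1 → 2 := by
    rintro ⟨θ0, h0⟩
    set c := Real.cos θ0 with hc
    have hdiff : DifferentiableOn ℂ a U := fun w hw => (ha w hw).differentiableWithinAt
    have hA : AnalyticOnNhd ℂ a U := hdiff.analyticOnNhd hU
    -- the derivative of `a` vanishes on `U`
    have key : ∀ w ∈ U, deriv a w = 0 := by
      intro w hw
      by_contra hne
      have hcont : ContinuousAt (deriv a) w := ((hA.deriv) w hw).continuousAt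
      have hev : ∀ᶠ z in nhds w, deriv a z ≠ 0 ∧ z ∈ U :=
        (hcont.eventually_ne hne).and (hU.eventually_mem hw)
      obtain ⟨ε, hε, hball⟩ := Metric.eventually_nhds_iff_ball.mp hev
      set B := Metric.ball w ε with hB
      have hwB : w ∈ B := Metric.mem_ball_self hε
      set f : ℂ → ℝ := fun z => ‖a z‖ ^ 2 with hf
      -- the numerator of `K θ0` vanishes on `B`
      have hnum : ∀ z ∈ B, (1 + f z ^ 2) * c - 2 * f z = 0 := by
        intro z hz
        obtain ⟨hdz, hzU⟩ := hball z hz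
        have hk := h0 z hzU
        rw [hK] at hk
        have habs : (0 : ℝ) ≤ ‖a z‖ := norm_nonneg _
        have hr1 : ‖a z‖ ≠ 1 := ha1 z hzU
        have hc1 : c ≤ 1 := Real.cos_le_one θ0
        have hD : 0 < 1 - 2 * ‖a z‖ ^ 2 * c + ‖a z‖ ^ 4 := by
          have h2 : ‖a z‖ ^ 2 ≠ 1 := by
            intro h; exact hr1 (by nlinarith)
          have h4 : 1 - ‖a z‖ ^ 2 ≠ 0 := sub_ne_zero.mpr (Ne.symm h2)
          have h3 : (0:ℝ) < (1 - ‖a z‖ ^ 2) ^ 2 := by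
            rcases h4.lt_or_gt with h | h <;> nlinarith
          nlinarith [mul_nonneg (sq_nonneg (‖a z‖)) (sub_nonneg.mpr hc1)]
        have hμz : (0:ℝ) < ‖μ z‖ ^ 2 :=
          pow_pos (norm_pos_iff.mpr (hμ0 z hzU)) 2
        have hden : ‖μ z‖ ^ 2 *
            (1 - 2 * ‖a z‖ ^ 2 * c + ‖a z‖ ^ 4) ^ 3 ≠ 0 :=
          ne_of_gt (mul_pos hμz (pow_pos hD 3))
        rcases div_eq_zero_iff.mp hk with h | h
        · rcases mul_eq_zero.mp h with h' | h'
          · exact absurd (norm_eq_zero.mp (pow_eq_zero_iff two_ne_zero |>.mp h')) hdz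
          · have h4 : ‖a z‖ ^ 4 = f z ^ 2 := by simp only [hf]; ring
            rw [h4] at h'
            exact h'
        · exact absurd h hden
      -- `f = |a|²` is constant on `B`
      have hconstf : ∀ z ∈ B, f z = f w := by
        rcases le_or_gt c 0 with hc0 | hc0
        · have h0' : ∀ z ∈ B, f z = 0 := by
            intro z hz
            have hz0 := hnum z hz
            have hfz : (0:ℝ) ≤ f z := sq_nonneg _
            nlinarith [mul_nonpos_of_nonneg_of_nonpos
              (by positivity : (0:ℝ) ≤ 1 + f z ^ 2) hc0]
          intro z hz; rw [h0' z hz, h0' w hwB]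
        · have hcn : c ≠ 0 := ne_of_gt hc0
          have hc1 : c ≤ 1 := Real.cos_le_one θ0
          have hcm1 : -1 ≤ c := Real.neg_one_le_cos θ0
          set s : ℝ := Real.sqrt (1 - c ^ 2) with hsdef
          have hs0 : 0 ≤ s := Real.sqrt_nonneg _
          have hs2 : s ^ 2 = 1 - c ^ 2 := Real.sq_sqrt (by nlinarith)
          set r1 : ℝ := (1 - s) / c with hr1def
          set r2 : ℝ := (1 + s) / c with hr2def
          have hroot : ∀ z ∈ B, f z = r1 ∨ f z = r2 := by
            intro z hz
            have hz0 := hnum z hz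
            have e1 : c * (f z - r1) = c * f z - (1 - s) := by
              rw [hr1def]; field_simp
            have e2 : c * (f z - r2) = c * f z - (1 + s) := by
              rw [hr2def]; field_simp
            have hmul : (c * (f z - r1)) * (c * (f z - r2)) = 0 := by
              rw [e1, e2]
              linear_combination c * hz0 - hs2
            rcases mul_eq_zero.mp hmul with h | h
            · exact Or.inl (sub_eq_zero.mp ((mul_eq_zero.mp h).resolve_left hcn))
            · exact Or.inr (sub_eq_zero.mp ((mul_eq_zero.mp h).resolve_left hcn))
          by_contra hnc
          push_neg at hnc
          obtain ⟨z2, hz2, hne2⟩ := hnc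
          have hr12 : r1 ≠ r2 := by
            intro h
            have e1 := hroot z2 hz2
            have e2 := hroot w hwB
            rw [← h] at e1 e2
            exact hne2 ((e1.elim id id).trans (e2.elim id id).symm)
          have hs0' : 0 < s := by
            rcases lt_or_eq_of_le hs0 with h | h
            · exact h
            · exact absurd (by rw [hr1def, hr2def, ← h]; ring_nf) hr12
          have hr1lt : r1 < r2 := by
            rw [hr1def, hr2def]
            exact (div_lt_div_iff_of_pos_right hc0).mpr (by linarith)
          -- both roots are attained on `B`
          have hboth : r1 ∈ f '' B ∧ r2 ∈ f '' B := by
            rcases hroot w hwB with hfw | hfw <;> rcases hroot z2 hz2 with hfz | hfz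
            · exact absurd (hfz.trans hfw.symm) hne2
            · exact ⟨⟨w, hwB, hfw⟩, ⟨z2, hz2, hfz⟩⟩
            · exact ⟨⟨z2, hz2, hfz⟩, ⟨w, hwB, hfw⟩⟩
            · exact absurd (hfz.trans hfw.symm) hne2
          -- midpoint contradiction
          have haB : ContinuousOn a B := fun z hz =>
            ((ha z (hball z hz).2).continuousAt).continuousWithinAt
          have hfc : ContinuousOn f B :=
            (continuous_norm.comp_continuousOn haB).pow 2
          have him : IsPreconnected (f '' B) :=
            ((convex_ball w ε).isPreconnected).image f hfc
          have hm : (r1 + r2) / 2 ∈ f '' B :=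
            him.ordConnected.out hboth.1 hboth.2 ⟨by linarith, by linarith⟩
          obtain ⟨z3, hz3, hfz3⟩ := hm
          rcases hroot z3 hz3 with h | h <;> rw [h] at hfz3 <;> linarith
      -- `|a|` is constant on `B`, hence `a` is constant on `B` by max modulus
      have hnorm : ∀ z ∈ B, ‖a z‖ = ‖a w‖ := by
        intro z hz
        have h := hconstf z hz
        simp only [hf] at h
        nlinarith [norm_nonneg (a z), norm_nonneg (a w),
          sq_nonneg (‖a z‖ - ‖a w‖),
          sq_nonneg (‖a z‖ + ‖a w‖)]
      have hmax : IsMaxOn (norm ∘ a) B w := by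
        intro z hz
        show ‖a z‖ ≤ ‖a w‖
        rw [hnorm z hz]
      have heq := Complex.eqOn_of_isPreconnected_of_isMaxOn_norm
        (convex_ball w ε).isPreconnected Metric.isOpen_ball
        (fun z hz => ((ha z (hball z hz).2).differentiableWithinAt)) hwB hmax
      have hevc : a =ᶠ[nhds w] Function.const ℂ (a w) :=
        Filter.eventuallyEq_of_mem (Metric.ball_mem_nhds w hε) heq
      exact hne (by rw [hevc.deriv_eq]; exact deriv_const w _)
    -- conclude by the identity theorem
    intro w hw w' hw'
    obtain ⟨ε, hε, hsub⟩ := Metric.isOpen_iff.mp hU w hw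
    have hloc := const_of_deriv_zero_ball (fun z hz => ha z (hsub hz))
      (fun z hz => key z (hsub hz))
    have hevEq : a =ᶠ[nhds w] fun _ => a w :=
      Filter.eventuallyEq_of_mem (Metric.ball_mem_nhds w hε) hloc
    have hEq := hA.eqOn_of_preconnected_of_eventuallyEq analyticOnNhd_const
      hconn.isPreconnected hw hevEq
    exact (hEq hw').symm
  tfae_finish
end
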